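/- Let G be an s-connected finite simple graph whose independence number is less than s. Then for every pair of distinct vertices u, v there is a Hamiltonian path from u to v. -/

import Mathlib

open SimpleGraph

variable {V : Type*}

/-- `G` has independence number at most `k`: every independent set has at most `k` vertices. -/
def IndepBound (G : SimpleGraph V) (k : ℕ) : Prop :=
  ∀ s : Finset V, (∀ a ∈ s, ∀ b ∈ s, a ≠ b → ¬ G.Adj a b) → s.card ≤ k

/-- The induced subgraph on `A` has independence number at most `k`. -/
def IndepBoundOn (G : SimpleGraph V) (A : Set V) (k : ℕ) : Prop :=
  ∀ s : Finset V, ↑s ⊆ A → (∀ a ∈ s, ∀ b ∈ s, a ≠ b → ¬ G.Adj a b) → s.card ≤ k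

/-- `x` is a cut vertex (articulation point): `G - x` is disconnected. -/
def IsCutVertex (G : SimpleGraph V) (x : V) : Prop :=
  ¬ (G.induce ({x}ᶜ : Set V)).Preconnected

/-- `S` is a vertex cut: `G - S` is disconnected. -/
def IsCutSet (G : SimpleGraph V) (S : Set V) : Prop :=
  ¬ (G.induce Sᶜ).Preconnected

/-- `G` has a Hamiltonian path with endpoints `u` and `v`. -/
def HasHamPathBetween [DecidableEq V] (G : SimpleGraph V) (u v : V) : Prop :=
  ∃ p : G.Walk u v, p.IsHamiltonian

/-- `G` has a Hamiltonian path starting at `u`. -/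
def HasHamPathFrom [DecidableEq V] (G : SimpleGraph V) (u : V) : Prop :=
  ∃ v, ∃ p : G.Walk u v, p.IsHamiltonian

/-- `G` has a Hamiltonian path. -/
def HasHamPath [DecidableEq V] (G : SimpleGraph V) : Prop :=
  ∃ u v, ∃ p : G.Walk u v, p.IsHamiltonian

/-- `G` has a path cover of size two: two vertex-disjoint paths, one starting at `u`
and the other starting at `v`, whose vertex sets partition `V(G)`. -/
def HasPathCover2 (G : SimpleGraph V) (u v : V) : Prop :=
  ∃ (a b : V) (p : G.Walk u a) (q : G.Walk v b), p.IsPath ∧ q.IsPath ∧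
    ∀ w, (w ∈ p.support ∧ w ∉ q.support) ∨ (w ∈ q.support ∧ w ∉ p.support)

/-- `G` is `s`-connected: more than `s` vertices, and removing any fewer than `s`
vertices leaves the graph connected. -/
def SConnected (G : SimpleGraph V) (s : ℕ) : Prop :=
  s < Nat.card V ∧ ∀ S : Set V, S.ncard < s → (G.induce Sᶜ).Connected

section Aux

open SimpleGraph.Walk

lemma aux_split [DecidableEq V] {G : SimpleGraph V} {a b z : V} (q : G.Walk a b)
    (hz : z ∈ q.support) (hzb : z ≠ b) :
    ∃ (c : V) (e : G.Adj z c) (t : G.Walk a z) (d : G.Walk c b),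
      q = t.append (Walk.cons e d) ∧ (⟨(z, c), e⟩ : G.Dart) ∈ q.darts ∧
      c = (q.dropUntil z hz).getVert 1 := by
  set r := q.dropUntil z hz with hr
  have hnil : ¬ r.Nil := Walk.not_nil_of_ne hzb
  refine ⟨r.getVert 1, Walk.adj_snd hnil, q.takeUntil z hz, r.tail, ?_, ?_, rfl⟩
  · rw [Walk.cons_tail_eq r hnil]
    exact (Walk.take_spec q hz).symm
  · have h1 : (⟨(z, r.getVert 1), Walk.adj_snd hnil⟩ : G.Dart) ∈
        (Walk.cons (Walk.adj_snd hnil) r.tail).darts := by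
      simp [Walk.darts_cons]
    rw [Walk.cons_tail_eq r hnil] at h1
    exact q.darts_dropUntil_subset hz h1

lemma aux_dart_fst_inj {G : SimpleGraph V} {a b : V} {q : G.Walk a b} (hq : q.IsPath) :
    ∀ d1 ∈ q.darts, ∀ d2 ∈ q.darts, d1.toProd.1 = d2.toProd.1 → d1 = d2 := by
  have hnd : (q.darts.map (·.toProd.1)).Nodup := by
    rw [q.map_fst_darts]
    exact hq.support_nodup.sublist (List.dropLast_sublist _)
  exact fun d1 h1 d2 h2 h => List.inj_on_of_nodup_map hnd h1 h2 h

lemma aux_dart_snd_inj {G : SimpleGraph V} {a b : V} {q : G.Walk a b} (hq : q.IsPath) :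
    ∀ d1 ∈ q.darts, ∀ d2 ∈ q.darts, d1.toProd.2 = d2.toProd.2 → d1 = d2 := by
  have hnd : (q.darts.map (·.toProd.2)).Nodup := by
    rw [q.map_snd_darts]
    exact hq.support_nodup.sublist (List.tail_sublist _)
  exact fun d1 h1 d2 h2 h => List.inj_on_of_nodup_map hnd h1 h2 h

lemma aux_dart_fst_ne_end {G : SimpleGraph V} {a b : V} {q : G.Walk a b} (hq : q.IsPath) :
    ∀ d ∈ q.darts, d.toProd.1 ≠ b := by
  intro d hd hdb
  have h := q.map_fst_darts_append
  have hnd := hq.support_nodup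
  rw [← h] at hnd
  rw [List.nodup_append'] at hnd
  exact hnd.2.2 (List.mem_map_of_mem hd) (by simp [hdb])

lemma aux_longer1 {G : SimpleGraph V} {u x y v : V}
    (q1 : G.Walk u x) (e : G.Adj x y) (q3 : G.Walk y v)
    (hp : (q1.append (Walk.cons e q3)).IsPath)
    (D : G.Walk x y) (hD : D.IsPath) (hlen : 2 ≤ D.length)
    (hsup : ∀ z ∈ D.support, z = x ∨ z = y ∨ z ∉ (q1.append (Walk.cons e q3)).support) :
    ∃ P : G.Walk u v, P.IsPath ∧ (q1.append (Walk.cons e q3)).length < P.length := by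
  have hOs : (q1.append (Walk.cons e q3)).support = q1.support ++ q3.support := by
    rw [Walk.support_append, Walk.support_cons, List.tail_cons]
  have hOnd := hp.support_nodup
  rw [hOs, List.nodup_append'] at hOnd
  obtain ⟨h1, h3, h13⟩ := hOnd
  have hDnd := hD.support_nodup
  rw [D.support_eq_cons, List.nodup_cons] at hDnd
  obtain ⟨hxD, hDt⟩ := hDnd
  have h3' := h3; rw [q3.support_eq_cons, List.nodup_cons] at h3'
  obtain ⟨hyq3, h3t⟩ := h3'
  have hDmem : ∀ z ∈ D.support.tail, z = y ∨ (z ∉ q1.support ∧ z ∉ q3.support) := by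
    intro z hzt
    have hz : z ∈ D.support := List.tail_subset _ hzt
    rcases hsup z hz with h | h | h
    · exact absurd (h ▸ hzt) hxD
    · exact Or.inl h
    · rw [hOs] at h; simp only [List.mem_append] at h; push_neg at h; exact Or.inr h
  refine ⟨q1.append (D.append q3), ?_, ?_⟩
  · rw [Walk.isPath_def, Walk.support_append, Walk.support_append, D.support_eq_cons,
      List.cons_append, List.tail_cons, List.nodup_append']
    refine ⟨h1, ?_, ?_⟩
    · rw [List.nodup_append']
      refine ⟨hDt, h3t, ?_⟩
      intro z hzD hz3
      rcases hDmem z hzD with h | h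
      · subst h; exact hyq3 hz3
      · exact h.2 (List.tail_subset _ hz3)
    · intro z hz1 hz
      rw [List.mem_append] at hz
      rcases hz with hz | hz
      · rcases hDmem z hz with h | h
        · subst h; exact h13 hz1 q3.start_mem_support
        · exact h.1 hz1
      · exact h13 hz1 (List.tail_subset _ hz)
  · rw [Walk.length_append, Walk.length_append, Walk.length_append, Walk.length_cons]
    omega

lemma aux_longer2 {G : SimpleGraph V} {u x y x' y' v : V}
    (q1 : G.Walk u x) (e : G.Adj x y) (q2 : G.Walk y x') (e' : G.Adj x' y') (q3 : G.Walk y' v)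
    (hp : (q1.append (Walk.cons e (q2.append (Walk.cons e' q3)))).IsPath)
    (D : G.Walk x x') (hD : D.IsPath) (hlen : 2 ≤ D.length)
    (hsup : ∀ z ∈ D.support, z = x ∨ z = x' ∨
      z ∉ (q1.append (Walk.cons e (q2.append (Walk.cons e' q3)))).support)
    (hyy' : G.Adj y y') :
    ∃ P : G.Walk u v, P.IsPath ∧
      (q1.append (Walk.cons e (q2.append (Walk.cons e' q3)))).length < P.length := by
  have hOs : (q1.append (Walk.cons e (q2.append (Walk.cons e' q3)))).support
      = q1.support ++ (q2.support ++ q3.support) := by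
    rw [Walk.support_append, Walk.support_cons, List.tail_cons, Walk.support_append,
      Walk.support_cons, List.tail_cons]
  have hOnd := hp.support_nodup
  rw [hOs, List.nodup_append'] at hOnd
  obtain ⟨h1, h23, h1r⟩ := hOnd
  rw [List.nodup_append'] at h23
  obtain ⟨h2, h3, h23d⟩ := h23
  have h12 : q1.support.Disjoint q2.support := fun a ha hb => h1r ha (List.mem_append_left _ hb)
  have h13 : q1.support.Disjoint q3.support := fun a ha hb => h1r ha (List.mem_append_right _ hb)
  have hDnd := hD.support_nodup
  rw [D.support_eq_cons, List.nodup_cons] at hDnd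
  obtain ⟨hxD, hDt⟩ := hDnd
  have hrev : q2.reverse.support = x' :: q2.reverse.support.tail := q2.reverse.support_eq_cons
  have hrevnd : q2.reverse.support.Nodup := by
    rw [Walk.support_reverse, List.nodup_reverse]; exact h2
  have hx'RT : x' ∉ q2.reverse.support.tail := by
    rw [hrev, List.nodup_cons] at hrevnd; exact hrevnd.1
  have hrevnd' : q2.reverse.support.Nodup := by
    rw [Walk.support_reverse, List.nodup_reverse]; exact h2
  have hRTnd : q2.reverse.support.tail.Nodup := hrevnd'.sublist (List.tail_sublist _)
  have hRTsub : ∀ z ∈ q2.reverse.support.tail, z ∈ q2.support := by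
    intro z hz
    have := List.tail_subset _ hz
    rwa [Walk.support_reverse, List.mem_reverse] at this
  have hDmem : ∀ z ∈ D.support.tail,
      z = x' ∨ (z ∉ q1.support ∧ z ∉ q2.support ∧ z ∉ q3.support) := by
    intro z hzt
    have hz : z ∈ D.support := List.tail_subset _ hzt
    rcases hsup z hz with h | h | h
    · exact absurd (h ▸ hzt) hxD
    · exact Or.inl h
    · rw [hOs] at h; simp only [List.mem_append] at h; push_neg at h
      exact Or.inr ⟨h.1, h.2.1, h.2.2⟩
  refine ⟨q1.append (D.append (q2.reverse.append (Walk.cons hyy' q3))), ?_, ?_⟩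
  · rw [Walk.isPath_def, Walk.support_append, Walk.support_append, Walk.support_append,
      Walk.support_cons, List.tail_cons, D.support_eq_cons, hrev, List.cons_append,
      List.cons_append, List.tail_cons]
    simp only [List.tail_cons]
    rw [List.nodup_append']
    refine ⟨h1, ?_, ?_⟩
    · rw [List.nodup_append']
      refine ⟨hDt, ?_, ?_⟩
      · rw [List.nodup_append']
        refine ⟨hRTnd, h3, fun a ha hb => h23d (hRTsub a ha) hb⟩
      · intro z hzD hz
        rw [List.mem_append] at hz
        rcases hDmem z hzD with h | h
        · subst h
          rcases hz with hz | hz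
          · exact hx'RT hz
          · exact h23d q2.end_mem_support hz
        · rcases hz with hz | hz
          · exact h.2.1 (hRTsub z hz)
          · exact h.2.2 hz
    · intro z hz1 hz
      simp only [List.mem_append] at hz
      rcases hz with hz | hz | hz
      · rcases hDmem z hz with h | h
        · subst h; exact h12 hz1 q2.end_mem_support
        · exact h.1 hz1
      · exact h12 hz1 (hRTsub z hz)
      · exact h13 hz1 hz
  · simp only [Walk.length_append, Walk.length_cons, Walk.length_reverse]
    omega

end Aux

/-- Chvátal–Erdős: an s-connected graph with independence number less than s is
Hamiltonian connected. -/
theorem stmt_16 [Fintype V] [DecidableEq V] (G : SimpleGraph V) (s : ℕ) (hs : 2 ≤ s)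
    (hG : SConnected G s)
    (hα : ∀ t : Finset V, (∀ a ∈ t, ∀ b ∈ t, a ≠ b → ¬ G.Adj a b) → t.card < s) :
    ∀ u v : V, u ≠ v → HasHamPathBetween G u v := by
  classical
  intro u v huv
  by_contra hno
  -- G is connected, so there is some u-v path
  have hconn : (G.induce (∅ᶜ : Set V)).Connected := hG.2 ∅ (by simpa using lt_of_lt_of_le two_pos hs)
  have hreach : G.Reachable u v := by
    obtain ⟨q⟩ := hconn.preconnected ⟨u, by simp⟩ ⟨v, by simp⟩
    exact ⟨q.map (SimpleGraph.Embedding.induce (∅ᶜ : Set V)).toHom⟩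
  obtain ⟨p0⟩ := hreach
  have hb : ∀ q : G.Walk u v, q.IsPath → q.length ≤ Fintype.card V := fun q hq => hq.length_lt.le
  set Pr : ℕ → Prop := fun n => ∃ q : G.Walk u v, q.IsPath ∧ q.length = n with hPrdef
  have hPr0 : Pr ((p0.toPath : G.Walk u v).length) := ⟨p0.toPath, p0.toPath.2, rfl⟩
  have hspec : Pr (Nat.findGreatest Pr (Fintype.card V)) :=
    Nat.findGreatest_spec (hb _ p0.toPath.2) hPr0
  obtain ⟨p, hp, hplen⟩ := hspec
  have hmax : ∀ q : G.Walk u v, q.IsPath → q.length ≤ p.length := by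
    intro q hq
    rw [hplen]
    exact Nat.le_findGreatest (hb q hq) ⟨q, hq, rfl⟩
  by_cases hfull : ∀ z : V, z ∈ p.support
  · exact hno ⟨p, fun z => List.count_eq_one_of_mem hp.support_nodup (hfull z)⟩
  push_neg at hfull
  obtain ⟨w, hw⟩ := hfull
  -- the off-path set reachable from w, and its on-path neighbourhood
  set A : Set V := {z | z ∈ p.support} with hAdef
  have hwA : w ∈ (Aᶜ : Set V) := hw
  set H : Set V := {z | ∃ hz : z ∈ (Aᶜ : Set V), (G.induce Aᶜ).Reachable ⟨w, hwA⟩ ⟨z, hz⟩}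
    with hHdef
  have hwH : w ∈ H := ⟨hwA, Reachable.refl _⟩
  have hHA : ∀ z ∈ H, z ∉ p.support := fun z hz => hz.1
  set N : Set V := {z | z ∈ p.support ∧ ∃ h ∈ H, G.Adj z h} with hNdef
  -- detours through H between members of N
  have hdet : ∀ x x' : V, x ∈ N → x' ∈ N → x ≠ x' →
      ∃ D : G.Walk x x', D.IsPath ∧ 2 ≤ D.length ∧
        ∀ z ∈ D.support, z = x ∨ z = x' ∨ z ∉ p.support := by
    rintro x x' ⟨hxs, h, hhH, hadj⟩ ⟨hx's, h', hh'H, hadj'⟩ hne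
    obtain ⟨hhA, hr⟩ := hhH
    obtain ⟨hh'A, hr'⟩ := hh'H
    obtain ⟨q0⟩ := hr.symm.trans hr'
    set Q' : G.Walk h h' :=
      (q0.toPath.val).map
        (SimpleGraph.Embedding.induce (Aᶜ : Set V)).toHom with hQ'def
    have hQ'path : Q'.IsPath :=
      Walk.map_isPath_of_injective Subtype.val_injective q0.toPath.2
    have hQ'mem : ∀ z ∈ Q'.support, z ∉ p.support := by
      intro z hz
      have hz2 : z ∈ ((q0.toPath.val).map (SimpleGraph.Embedding.induce (Aᶜ : Set V)).toHom).support := hz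
      rw [Walk.support_map] at hz2
      obtain ⟨⟨z', hz'⟩, _, rfl⟩ := List.mem_map.mp hz2
      exact hz'
    refine ⟨Walk.cons hadj (Q'.concat hadj'.symm), ?_, ?_, ?_⟩
    · rw [Walk.isPath_def, Walk.support_cons, Walk.support_concat, List.nodup_cons]
      refine ⟨?_, ?_⟩
      · intro hc
        rw [List.mem_append] at hc
        rcases hc with hc | hc
        · exact hQ'mem x hc hxs
        · rw [List.mem_singleton] at hc; exact hne hc
      · rw [List.nodup_append']
        exact ⟨hQ'path.support_nodup, List.nodup_singleton _,
          fun a ha hb => hQ'mem a ha (List.mem_singleton.mp hb ▸ hx's)⟩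
    · rw [Walk.length_cons, Walk.length_concat]; omega
    · intro z hz
      rw [Walk.support_cons, Walk.support_concat] at hz
      rcases List.mem_cons.mp hz with rfl | hz
      · exact Or.inl rfl
      · rcases List.mem_append.mp hz with hz | hz
        · exact Or.inr (Or.inr (hQ'mem z hz))
        · exact Or.inr (Or.inl (List.mem_singleton.mp hz))
  -- the successor function along p
  set f : V → V := fun z => if hz : z ∈ p.support then (p.dropUntil z hz).getVert 1 else z
    with hfdef
  have hfdart : ∀ (z : V) (hz : z ∈ p.support), z ≠ v →
      ∃ d : G.Dart, d ∈ p.darts ∧ d.toProd = (z, f z) := by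
    intro z hz hzv
    obtain ⟨c, e, t, d, heq, hdart, hc⟩ := aux_split p hz hzv
    exact ⟨_, hdart, by simp [hfdef, dif_pos hz, hc]⟩
  have hsucc : ∀ d ∈ p.darts, d.toProd.2 = f d.toProd.1 := by
    intro d hd
    have hz : d.toProd.1 ∈ p.support := Walk.dart_fst_mem_support_of_mem_darts p hd
    have hzv : d.toProd.1 ≠ v := aux_dart_fst_ne_end hp d hd
    obtain ⟨d', hd', hd'2⟩ := hfdart _ hz hzv
    have : d = d' := aux_dart_fst_inj hp d hd d' hd' (by rw [hd'2])
    rw [this, hd'2]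
  have hfmem : ∀ (z : V), z ∈ p.support → z ≠ v → f z ∈ p.support := by
    intro z hz hzv
    obtain ⟨d, hd, hd2⟩ := hfdart z hz hzv
    have := Walk.dart_snd_mem_support_of_mem_darts p hd
    rwa [hd2] at this
  have hfadj : ∀ (z : V), z ∈ p.support → z ≠ v → G.Adj z (f z) := by
    intro z hz hzv
    obtain ⟨d, hd, hd2⟩ := hfdart z hz hzv
    have := d.adj
    rwa [show d.toProd.1 = z by rw [hd2], show d.toProd.2 = f z by rw [hd2]] at this
  have hfinj : ∀ (z z' : V), z ∈ p.support → z' ∈ p.support → z ≠ v → z' ≠ v →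
      f z = f z' → z = z' := by
    intro z z' hz hz' hzv hz'v hff
    obtain ⟨d, hd, hd2⟩ := hfdart z hz hzv
    obtain ⟨d', hd', hd'2⟩ := hfdart z' hz' hz'v
    have : d = d' := aux_dart_snd_inj hp d hd d' hd' (by rw [hd2, hd'2, hff])
    have h1 : d.toProd.1 = z := by rw [hd2]
    have h2 : d'.toProd.1 = z' := by rw [hd'2]
    rw [← h1, ← h2, this]
  have hdecomp1 : ∀ (z : V) (hz : z ∈ p.support), z ≠ v →
      ∃ (q1 : G.Walk u z) (e : G.Adj z (f z)) (q3 : G.Walk (f z) v),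
        p = q1.append (Walk.cons e q3) := by
    intro z hz hzv
    obtain ⟨c, e, t, d, heq, hdart, hc⟩ := aux_split p hz hzv
    have hcf : c = f z := hsucc _ hdart
    subst hcf
    exact ⟨t, e, d, heq⟩
  have hdecomp2 : ∀ (z z' : V), z ∈ p.support → z' ∈ p.support → z ≠ z' → z ≠ v → z' ≠ v →
      (∃ (q1 : G.Walk u z) (e : G.Adj z (f z)) (q2 : G.Walk (f z) z')
         (e' : G.Adj z' (f z')) (q3 : G.Walk (f z') v),
         p = q1.append (Walk.cons e (q2.append (Walk.cons e' q3)))) ∨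
      (∃ (q1 : G.Walk u z') (e : G.Adj z' (f z')) (q2 : G.Walk (f z') z)
         (e' : G.Adj z (f z)) (q3 : G.Walk (f z) v),
         p = q1.append (Walk.cons e (q2.append (Walk.cons e' q3)))) := by
    intro z z' hz hz' hne hzv hz'v
    obtain ⟨q1, e, q3, heq⟩ := hdecomp1 z hz hzv
    have hz'' : z' ∈ q1.support ∨ z' ∈ q3.support := by
      have hmem := hz'
      rw [heq, Walk.mem_support_append_iff] at hmem
      rcases hmem with h | h
      · exact Or.inl h
      · rw [Walk.support_cons] at h
        rcases List.mem_cons.mp h with rfl | h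
        · exact absurd rfl hne.symm
        · exact Or.inr h
    rcases hz'' with hcase | hcase
    · right
      obtain ⟨c, e2, t, d, heq2, hdart, _⟩ := aux_split q1 hcase hne.symm
      have hcf : c = f z' := by
        have hd : (⟨(z', c), e2⟩ : G.Dart) ∈ p.darts := by
          rw [heq, Walk.darts_append]
          exact List.mem_append_left _ hdart
        exact hsucc _ hd
      subst hcf
      refine ⟨t, e2, d, e, q3, ?_⟩
      rw [heq, heq2, ← Walk.append_assoc, Walk.cons_append]
    · left
      obtain ⟨c, e2, t, d, heq2, hdart, _⟩ := aux_split q3 hcase hz'v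
      have hcf : c = f z' := by
        have hd : (⟨(z', c), e2⟩ : G.Dart) ∈ p.darts := by
          rw [heq, Walk.darts_append, Walk.darts_cons]
          exact List.mem_append_right _ (List.mem_cons_of_mem _ hdart)
        exact hsucc _ hd
      subst hcf
      exact ⟨q1, e, t, e2, d, by rw [heq, heq2]⟩
  -- no two consecutive vertices of p lie in N
  have hNoCons : ∀ (z : V), z ∈ p.support → z ≠ v → z ∈ N → f z ∈ N → False := by
    intro z hz hzv hzN hfzN
    obtain ⟨q1, e, q3, heq⟩ := hdecomp1 z hz hzv
    obtain ⟨D, hD, hDlen, hDsup⟩ := hdet z (f z) hzN hfzN (hfadj z hz hzv).ne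
    have hp' : (q1.append (Walk.cons e q3)).IsPath := heq ▸ hp
    obtain ⟨P, hP, hPlen⟩ := aux_longer1 q1 e q3 hp' D hD hDlen
      (fun t ht => by have := hDsup t ht; rwa [heq] at this)
    have h1 := hmax P hP
    have h2 := congrArg Walk.length heq
    omega
  have hNsup : ∀ z ∈ N, z ∈ p.support := fun z hz => hz.1
  -- N is a cut set, so it has at least s elements
  have hNcard : s ≤ N.ncard := by
    by_contra hlt
    push_neg at hlt
    have hGN := hG.2 N hlt
    have hz₀ : ∃ z₀, z₀ ∈ p.support ∧ z₀ ∉ N := by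
      by_cases hu : u ∈ N
      · exact ⟨f u, hfmem u p.start_mem_support huv,
          fun hc => hNoCons u p.start_mem_support huv hu hc⟩
      · exact ⟨u, p.start_mem_support, hu⟩
    obtain ⟨z₀, hz₀s, hz₀N⟩ := hz₀
    have hwN : w ∈ (Nᶜ : Set V) := fun hc => hw (hNsup w hc)
    have hz₀N' : z₀ ∈ (Nᶜ : Set V) := hz₀N
    obtain ⟨R0⟩ := hGN.preconnected ⟨w, hwN⟩ ⟨z₀, hz₀N'⟩
    set R : G.Walk w z₀ := R0.map (SimpleGraph.Embedding.induce (Nᶜ : Set V)).toHom with hRdef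
    have hRsup : ∀ t ∈ R.support, t ∉ N := by
      intro t ht
      have ht2 : t ∈ (R0.map (SimpleGraph.Embedding.induce (Nᶜ : Set V)).toHom).support := ht
      rw [Walk.support_map] at ht2
      obtain ⟨⟨t', ht'⟩, _, rfl⟩ := List.mem_map.mp ht2
      exact ht'
    have hkey : ∀ (a b : V) (W : G.Walk a b), a ∈ H → (∀ t ∈ W.support, t ∉ N) → b ∈ H := by
      intro a b W
      induction W with
      | nil => exact fun h _ => h
      | cons hac q ih =>
        rename_i a' c' b'
        intro ha hsup
        refine ih ?_ (fun t ht => hsup t (by rw [Walk.support_cons]; exact List.mem_cons_of_mem _ ht))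
        by_cases hc : c' ∈ p.support
        · exact absurd ⟨hc, a', ha, hac.symm⟩
            (hsup c' (by rw [Walk.support_cons]; exact List.mem_cons_of_mem _ q.start_mem_support))
        · obtain ⟨haA, hra⟩ := ha
          exact ⟨hc, hra.trans ⟨Walk.cons (by exact hac) Walk.nil⟩⟩
    exact hHA z₀ (hkey w z₀ R hwH hRsup) hz₀s
  -- build a large independent set
  set Nfin : Finset V := Finset.univ.filter (· ∈ N) with hNfindef
  have hNfin_coe : (Nfin : Set V) = N := by ext z; simp [hNfindef]
  have hNfin_card : s ≤ Nfin.card := by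
    have h := hNcard
    rwa [← hNfin_coe, Set.ncard_coe_finset] at h
  have hmemNfin : ∀ z, z ∈ Nfin ↔ z ∈ N := by intro z; simp [hNfindef]
  set T : Finset V := insert w ((Nfin.erase v).image f) with hTdef
  have himg : ∀ b ∈ (Nfin.erase v).image f, ∃ z, z ∈ N ∧ z ≠ v ∧ b = f z := by
    intro b hb
    obtain ⟨z, hz, rfl⟩ := Finset.mem_image.mp hb
    have hz' := Finset.mem_erase.mp hz
    exact ⟨z, (hmemNfin z).mp hz'.2, hz'.1, rfl⟩
  have hwimg : w ∉ (Nfin.erase v).image f := by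
    intro hc
    obtain ⟨z, hzN, hzv, hfz⟩ := himg w hc
    exact hw (hfz ▸ hfmem z (hNsup z hzN) hzv)
  have hTcard : s ≤ T.card := by
    rw [hTdef, Finset.card_insert_of_notMem hwimg, Finset.card_image_of_injOn ?_]
    · have h1 : Nfin.card - 1 ≤ (Nfin.erase v).card := Finset.pred_card_le_card_erase
      omega
    · intro z hz z' hz' hff
      rw [Finset.mem_coe] at hz hz'
      have h1 := Finset.mem_erase.mp hz
      have h2 := Finset.mem_erase.mp hz'
      exact hfinj z z' (hNsup z ((hmemNfin z).mp h1.2)) (hNsup z' ((hmemNfin z').mp h2.2))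
        h1.1 h2.1 hff
  have hwf : ∀ z, z ∈ N → z ≠ v → ¬ G.Adj w (f z) := by
    intro z hzN hzv hadj
    exact hNoCons z (hNsup z hzN) hzv hzN ⟨hfmem z (hNsup z hzN) hzv, w, hwH, hadj.symm⟩
  have hff : ∀ z z', z ∈ N → z' ∈ N → z ≠ z' → z ≠ v → z' ≠ v → ¬ G.Adj (f z) (f z') := by
    intro z z' hzN hz'N hne hzv hz'v hadj
    rcases hdecomp2 z z' (hNsup z hzN) (hNsup z' hz'N) hne hzv hz'v with
      ⟨q1, e, q2, e', q3, heq⟩ | ⟨q1, e, q2, e', q3, heq⟩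
    · obtain ⟨D, hD, hDlen, hDsup⟩ := hdet z z' hzN hz'N hne
      obtain ⟨P, hP, hPlen⟩ := aux_longer2 q1 e q2 e' q3 (heq ▸ hp) D hD hDlen
        (fun t ht => by have := hDsup t ht; rwa [heq] at this) hadj
      have h1 := hmax P hP
      have h2 := congrArg Walk.length heq
      omega
    · obtain ⟨D, hD, hDlen, hDsup⟩ := hdet z' z hz'N hzN hne.symm
      obtain ⟨P, hP, hPlen⟩ := aux_longer2 q1 e q2 e' q3 (heq ▸ hp) D hD hDlen
        (fun t ht => by have := hDsup t ht; rwa [heq] at this) hadj.symm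
      have h1 := hmax P hP
      have h2 := congrArg Walk.length heq
      omega
  have hindep : ∀ a ∈ T, ∀ b ∈ T, a ≠ b → ¬ G.Adj a b := by
    intro a ha b hb hab
    rw [hTdef, Finset.mem_insert] at ha hb
    rcases ha with rfl | ha
    · rcases hb with rfl | hb
      · exact absurd rfl hab
      · obtain ⟨z, hzN, hzv, rfl⟩ := himg b hb
        exact hwf z hzN hzv
    · obtain ⟨z, hzN, hzv, rfl⟩ := himg a ha
      rcases hb with rfl | hb
      · exact fun hadj => hwf z hzN hzv hadj.symm
      · obtain ⟨z', hz'N, hz'v, rfl⟩ := himg b hb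
        have hnezz : z ≠ z' := by
          intro h; exact hab (by rw [h])
        exact hff z z' hzN hz'N hnezz hzv hz'v
  exact absurd (hα T hindep) (not_lt.mpr hTcard)
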